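/- Let r ≥ 1 be an integer and d > 0 a real number. For each squarefree integer q ≥ 1 let Ψ_q : ℤ^r → ℂ be a function with |Ψ_q| ≤ 1 that factors through ℤ^r → (ℤ/qℤ)^r, with normalized finite Fourier transform Ψ̂_q, and let φ : ℝ^r → ℂ be a Schwartz function with Fourier transform φ̂. Define E(X,q) := X^{r/d} · ∑_{0 ≠ x ∈ ℤ^r} Ψ̂_q(x)·φ̂(x·X^{1/d}/q). Suppose there are α > 0, c < r/d, η > 0 and a constant C₁ such that for all X ≥ 2 and all real N with 1 ≤ N ≤ X^α, setting Z := 2N·X^{η−1/d}, one has X^{r/d} · ∑_{q squarefree, N ≤ q ≤ 2N} ∑ |Ψ̂_q(x)| ≤ C₁·X^c, the inner sum over nonzero x ∈ ℤ^r with |x_i| ≤ Z for every coordinate i. Then there exist c' < r/d and a constant C₂ such that ∑_{q < X^α, q squarefree} |E(X,q)| ≤ C₂·X^{c'} for all X ≥ 2. -/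

import Mathlib

open scoped Classical

/-- The normalized finite Fourier transform of a function `Ψ : ℤ^r → ℂ` that factors
through the reduction map `ℤ^r → (ℤ/qℤ)^r`:
`Ψ̂(w) = q^{-r} ∑_{v ∈ (ℤ/qℤ)^r} Ψ(v) exp(2πi⟨v,w⟩/q)`. -/
noncomputable def fourierZ (r q : ℕ) (Ψ : (Fin r → ℤ) → ℂ) (w : Fin r → ℤ) : ℂ :=
  (q : ℂ) ^ (-(r : ℤ)) *
    ∑ v ∈ Fintype.piFinset (fun _ : Fin r => Finset.range q),
      Ψ (fun i => (v i : ℤ)) *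
        Complex.exp (2 * Real.pi * Complex.I * (∑ i, (v i : ℂ) * (w i : ℂ)) / q)

/-! ### Auxiliary lemmas -/

lemma abs_fourierZ_le_one (r q : ℕ) (hq : 1 ≤ q) (Ψ : (Fin r → ℤ) → ℂ)
    (hΨ : ∀ x, ‖Ψ x‖ ≤ 1) (w : Fin r → ℤ) :
    ‖fourierZ r q Ψ w‖ ≤ 1 := by
  have hq0 : (0:ℝ) < (q:ℝ) := by exact_mod_cast hq
  have key : ∀ v ∈ Fintype.piFinset (fun _ : Fin r => Finset.range q),
      ‖Ψ (fun i => (v i : ℤ)) *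
        Complex.exp (2 * Real.pi * Complex.I * (∑ i, (v i : ℂ) * (w i : ℂ)) / q)‖ ≤ 1 := by
    intro v _
    rw [norm_mul]
    have h2 : ‖Complex.exp (2 * Real.pi * Complex.I *
        (∑ i, (v i : ℂ) * (w i : ℂ)) / q)‖ = 1 := by
      have : (2 * Real.pi * Complex.I * (∑ i, (v i : ℂ) * (w i : ℂ)) / q)
          = ((2 * Real.pi * (∑ i, (v i : ℝ) * (w i : ℝ)) / q : ℝ) : ℂ) * Complex.I := by
        push_cast
        ring
      rw [this, Complex.norm_exp_ofReal_mul_I]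
    calc ‖Ψ fun i => (v i : ℤ)‖ * _ ≤ 1 * 1 := by
          apply mul_le_mul (hΨ _) (le_of_eq h2) (norm_nonneg _) zero_le_one
      _ = 1 := mul_one 1
  rw [fourierZ, norm_mul]
  have h1 : ‖(q : ℂ) ^ (-(r:ℤ))‖ = (q:ℝ) ^ (-(r:ℤ)) := by
    rw [norm_zpow, Complex.norm_natCast]
  rw [h1]
  calc (q:ℝ) ^ (-(r:ℤ)) * ‖∑ v ∈ _, _‖
      ≤ (q:ℝ) ^ (-(r:ℤ)) * ((Fintype.piFinset (fun _ : Fin r => Finset.range q)).card • 1) := by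
        apply mul_le_mul_of_nonneg_left _ (zpow_nonneg hq0.le _)
        exact (norm_sum_le _ _).trans (Finset.sum_le_card_nsmul _ _ 1 key)
    _ ≤ 1 := by
        rw [Fintype.card_piFinset]
        simp only [Finset.card_range, Finset.prod_const, Finset.card_univ, Fintype.card_fin,
          smul_eq_mul, mul_one]
        rw [zpow_neg, zpow_natCast]
        rw [inv_mul_le_one₀ (by positivity)]
        simp

/-- The weight function used as a summable majorant on `ℤ^r`. -/
noncomputable def W (r : ℕ) (x : Fin r → ℤ) : ℝ := ∏ i, ((1 + |((x i):ℝ)|)^2)⁻¹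

lemma W_nonneg (r : ℕ) (x : Fin r → ℤ) : 0 ≤ W r x := by
  apply Finset.prod_nonneg; intro i _; positivity

lemma summable_g : Summable (fun n : ℤ => ((1 + |(n:ℝ)|)^2)⁻¹) := by
  have hn : Summable (fun n : ℕ => ((1 + (n:ℝ))^2)⁻¹) := by
    have := (summable_nat_add_iff (f := fun n : ℕ => ((n:ℝ)^2)⁻¹) 1).2
      ((Real.summable_one_div_nat_pow (p := 2)).2 one_lt_two |>.congr (by intro n; simp [one_div]))
    exact this.congr (by intro n; push_cast; ring_nf)
  apply Summable.of_nat_of_neg <;>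
    · apply hn.congr; intro n; push_cast; simp [abs_of_nonneg, add_comm]

lemma summable_W (r : ℕ) : Summable (W r) := by
  induction r with
  | zero => exact summable_of_finite_support (Set.toFinite _)
  | succ n ih =>
    have h := summable_g.mul_of_nonneg ih (fun n => by positivity) (fun x => W_nonneg n x)
    rw [← Equiv.summable_iff (Fin.consEquiv (fun _ : Fin (n+1) => ℤ))]
    apply h.congr
    intro p
    simp only [Function.comp_apply, Fin.consEquiv_apply, W, Fin.prod_univ_succ,
      Fin.cons_zero, Fin.cons_succ]

lemma coord_le_norm (r : ℕ) (y : EuclideanSpace ℝ (Fin r)) (i : Fin r) : |y i| ≤ ‖y‖ := by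
  rw [EuclideanSpace.norm_eq]
  rw [← Real.sqrt_sq_eq_abs]
  apply Real.sqrt_le_sqrt
  calc y i ^ 2 = ‖y i‖^2 := by rw [Real.norm_eq_abs, sq_abs]
    _ ≤ _ := Finset.single_le_sum (f := fun j => ‖y j‖^2) (fun j _ => by positivity)
        (Finset.mem_univ i)

lemma one_le_pinorm (r : ℕ) (x : Fin r → ℤ) (hx : x ≠ 0) : 1 ≤ ‖x‖ := by
  obtain ⟨i, hi⟩ := Function.ne_iff.1 hx
  calc (1:ℝ) ≤ ‖x i‖ := by
        rw [Int.norm_eq_abs]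
        exact_mod_cast Int.one_le_abs (by simpa using hi)
    _ ≤ ‖x‖ := norm_le_pi_norm x i

lemma pinorm_le (r : ℕ) (x : Fin r → ℤ) (c : ℝ) (hc : 0 ≤ c) (h : ∀ i, |(x i : ℝ)| ≤ c) :
    ‖x‖ ≤ c := by
  apply pi_norm_le_iff_of_nonneg hc |>.2
  intro i
  rw [Int.norm_eq_abs]
  exact_mod_cast h i

lemma abs_coord_le_pinorm (r : ℕ) (x : Fin r → ℤ) (i : Fin r) : |(x i : ℝ)| ≤ ‖x‖ := by
  rw [← Int.norm_eq_abs]; push_cast; exact norm_le_pi_norm x i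

lemma W_bound (r : ℕ) (x : Fin r → ℤ) (hx : 1 ≤ ‖x‖) :
    (‖x‖^(2*r))⁻¹ ≤ 2^(2*r) * W r x := by
  have hx0 : (0:ℝ) < ‖x‖ := lt_of_lt_of_le one_pos hx
  have h1 : ∏ i, (1 + |((x i):ℝ)|)^2 ≤ (2*‖x‖)^(2*r) := by
    have key : ∀ i : Fin r, (1 + |((x i):ℝ)|)^2 ≤ (2*‖x‖)^2 := by
      intro i
      apply pow_le_pow_left₀ (by positivity)
      have := abs_coord_le_pinorm r x i
      linarith
    calc ∏ i, (1 + |((x i):ℝ)|)^2 ≤ ∏ _i : Fin r, (2*‖x‖)^2 :=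
          Finset.prod_le_prod (fun i _ => by positivity) (fun i _ => key i)
      _ = (2*‖x‖)^(2*r) := by
          rw [Finset.prod_const, ← pow_mul, Finset.card_univ, Fintype.card_fin, mul_comm]
  have hW : ((2*‖x‖)^(2*r))⁻¹ ≤ W r x := by
    have heq : W r x = (∏ i, (1 + |((x i):ℝ)|)^2)⁻¹ := by
      rw [W, ← Finset.prod_inv_distrib]
    rw [heq]
    exact inv_anti₀ (by positivity) h1
  calc (‖x‖^(2*r))⁻¹ = 2^(2*r) * ((2*‖x‖)^(2*r))⁻¹ := by
        rw [mul_pow, mul_inv]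
        field_simp
    _ ≤ 2^(2*r) * W r x := by
        apply mul_le_mul_of_nonneg_left hW (by positivity)

/-- Abbreviation for the inner box sum appearing in the hypothesis. -/
noncomputable def Hfun (r : ℕ) (Ψ : ℕ → (Fin r → ℤ) → ℂ) (X η dinv N : ℝ) (q : ℕ) : ℝ :=
  ∑' x : Fin r → ℤ,
    (if x ≠ 0 ∧ ∀ i, |(x i : ℝ)| ≤ 2 * N * X ^ (η - dinv) then
      ‖fourierZ r q (Ψ q) x‖
    else 0)

lemma Hfun_eq (r : ℕ) (Ψ : ℕ → (Fin r → ℤ) → ℂ) (X η dinv N : ℝ) (q : ℕ) :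
    (∑' x : Fin r → ℤ,
      (if x ≠ 0 ∧ ∀ i, |(x i : ℝ)| ≤ 2 * N * X ^ (η - dinv) then
        ‖fourierZ r q (Ψ q) x‖
      else 0)) = Hfun r Ψ X η dinv N q := rfl

lemma Hfun_nonneg (r : ℕ) (Ψ : ℕ → (Fin r → ℤ) → ℂ) (X η dinv N : ℝ) (q : ℕ) :
    0 ≤ Hfun r Ψ X η dinv N q := by
  apply tsum_nonneg
  intro x
  split
  · exact norm_nonneg _
  · exact le_rfl

set_option maxHeartbeats 1600000 in
/-- Level of distribution, simplified version: a bound on sums of `|Ψ̂_q(x)|` over boxes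
and dyadic ranges of squarefree `q` implies a level of distribution `α`. -/
theorem level_of_distribution_of_box_bound
    (r : ℕ) (hr : 1 ≤ r) (d : ℝ) (hd : 0 < d)
    (Ψ : ℕ → (Fin r → ℤ) → ℂ)
    (hΨ1 : ∀ q : ℕ, Squarefree q → ∀ x, ‖Ψ q x‖ ≤ 1)
    (hΨfac : ∀ q : ℕ, Squarefree q → ∀ x y : Fin r → ℤ,
      (∀ i, (q : ℤ) ∣ x i - y i) → Ψ q x = Ψ q y)
    (φ : SchwartzMap (EuclideanSpace ℝ (Fin r)) ℂ)
    (α c η C₁ : ℝ) (hα : 0 < α) (hc : c < (r : ℝ) / d) (hη : 0 < η)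
    (hyp : ∀ X : ℝ, 2 ≤ X → ∀ N : ℝ, 1 ≤ N → N ≤ X ^ α →
      X ^ ((r : ℝ) / d) *
          ∑ q ∈ (Finset.range (⌊2 * N⌋₊ + 1)).filter
              (fun q : ℕ => Squarefree q ∧ N ≤ (q : ℝ) ∧ (q : ℝ) ≤ 2 * N),
            ∑' x : Fin r → ℤ,
              (if x ≠ 0 ∧ ∀ i, |(x i : ℝ)| ≤ 2 * N * X ^ (η - 1 / d) then
                ‖fourierZ r q (Ψ q) x‖
              else 0)
        ≤ C₁ * X ^ c) :
    ∃ c' : ℝ, c' < (r : ℝ) / d ∧ ∃ C₂ : ℝ, ∀ X : ℝ, 2 ≤ X →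
      ∑ q ∈ (Finset.range ⌈X ^ α⌉₊).filter
          (fun q : ℕ => Squarefree q ∧ (q : ℝ) < X ^ α),
        ‖((X ^ ((r : ℝ) / d) : ℝ) : ℂ) *
          ∑' x : Fin r → ℤ,
            (if x ≠ 0 then
              fourierZ r q (Ψ q) x *
                FourierTransform.fourier (⇑φ : EuclideanSpace ℝ (Fin r) → ℂ)
                  (WithLp.toLp 2 (fun i => (x i : ℝ) * X ^ (1 / d) / q) : EuclideanSpace ℝ (Fin r))
            else 0)‖
        ≤ C₂ * X ^ c' := by
  classical
  haveI : Nonempty (Fin r) := ⟨⟨0, hr⟩⟩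
  simp only [Hfun_eq] at hyp
  set g : SchwartzMap (EuclideanSpace ℝ (Fin r)) ℂ := SchwartzMap.fourierTransformCLM ℝ φ
    with hgdef
  have hg : ∀ ξ, FourierTransform.fourier (⇑φ : EuclideanSpace ℝ (Fin r) → ℂ) ξ = g ξ := by
    intro ξ; rw [hgdef, SchwartzMap.fourierTransformCLM_apply]; rfl
  have hrpos : (0:ℝ) < r := by exact_mod_cast hr
  have hrd : 0 < (r : ℝ) / d := div_pos hrpos hd
  set ε : ℝ := ((r : ℝ) / d - c) / 2 with hεdef
  have hε : 0 < ε := by rw [hεdef]; linarith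
  set c' : ℝ := max (c + ε) 0 with hc'def
  have hc'lt : c' < (r : ℝ) / d := by
    rw [hc'def]; apply max_lt _ hrd; rw [hεdef]; linarith
  have hc'0 : 0 ≤ c' := le_max_right _ _
  have hcε : c + ε ≤ c' := le_max_left _ _
  set k : ℕ := ⌈((r : ℝ) / d + α * (2 * r + 1)) / η⌉₊ with hkdef
  have hk : (r : ℝ) / d + α * (2 * r + 1) ≤ η * k := by
    rw [hkdef, ← div_le_iff₀' hη]
    exact Nat.le_ceil _
  obtain ⟨C₀, hC₀pos, hC₀⟩ := g.decay 0 0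
  have hC₀' : ∀ ξ, ‖g ξ‖ ≤ C₀ := fun ξ => by
    have := hC₀ ξ; rwa [pow_zero, one_mul, norm_iteratedFDeriv_zero] at this
  obtain ⟨Ck, hCkpos, hCk⟩ := g.decay (k + 2 * r) 0
  have hCk' : ∀ ξ, ‖ξ‖ ^ (k + 2 * r) * ‖g ξ‖ ≤ Ck := fun ξ => by
    have := hCk ξ; rwa [norm_iteratedFDeriv_zero] at this
  obtain ⟨Cr, hCrpos, hCr⟩ := g.decay (2 * r) 0
  have hCr' : ∀ ξ, ‖ξ‖ ^ (2 * r) * ‖g ξ‖ ≤ Cr := fun ξ => by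
    have := hCr ξ; rwa [norm_iteratedFDeriv_zero] at this
  set SW : ℝ := ∑' x : Fin r → ℤ, W r x with hSWdef
  have hSW0 : 0 ≤ SW := tsum_nonneg (W_nonneg r)
  have hlog2 : (0:ℝ) < Real.log 2 := Real.log_pos one_lt_two
  set A : ℝ := 2 + α / (ε * Real.log 2) with hAdef
  have hA0 : 0 ≤ A := by
    rw [hAdef]; positivity
  set Ct : ℝ := 2 * Ck * 2 ^ (2 * r) * SW with hCtdef
  have hCt0 : 0 ≤ Ct := by rw [hCtdef]; positivity
  -- C₁ is nonnegative
  have hC₁ : 0 ≤ C₁ := by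
    have h0 := hyp 2 le_rfl 1 le_rfl (Real.one_le_rpow one_le_two hα.le)
    have h1 : (0:ℝ) ≤ (2:ℝ) ^ ((r : ℝ) / d) *
        ∑ q ∈ (Finset.range (⌊2 * (1:ℝ)⌋₊ + 1)).filter
            (fun q : ℕ => Squarefree q ∧ (1:ℝ) ≤ (q : ℝ) ∧ (q : ℝ) ≤ 2 * 1),
          Hfun r Ψ 2 η (1/d) 1 q := by
      apply mul_nonneg (Real.rpow_nonneg (by norm_num) _)
      exact Finset.sum_nonneg fun q _ => Hfun_nonneg _ _ _ _ _ _ _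
    have h2 : (0:ℝ) ≤ C₁ * 2 ^ c := le_trans h1 h0
    by_contra hneg
    push_neg at hneg
    have : C₁ * (2:ℝ) ^ c < 0 :=
      mul_neg_of_neg_of_pos hneg (Real.rpow_pos_of_pos two_pos c)
    linarith
  refine ⟨c', hc'lt, C₀ * A * C₁ + Ct, ?_⟩
  intro X hX
  have hX0 : (0:ℝ) < X := lt_of_lt_of_le two_pos hX
  have hX1 : (1:ℝ) ≤ X := by linarith
  have hT1 : (1:ℝ) ≤ X ^ α := Real.one_le_rpow hX1 hα.le
  have hP0 : (0:ℝ) < X ^ (1/d) := Real.rpow_pos_of_pos hX0 _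
  have hC₁X : (0:ℝ) ≤ C₁ * X ^ c :=
    mul_nonneg hC₁ (Real.rpow_nonneg hX0.le _)
  have hXrd : (0:ℝ) ≤ X ^ ((r : ℝ) / d) := Real.rpow_nonneg hX0.le _
  have hXη : (0:ℝ) < X ^ η := Real.rpow_pos_of_pos hX0 _
  set J : ℕ := Nat.log 2 ⌈X ^ α⌉₊ + 1 with hJdef
  set Q : Finset ℕ := (Finset.range ⌈X ^ α⌉₊).filter
      (fun q : ℕ => Squarefree q ∧ (q : ℝ) < X ^ α) with hQdef
  -- the per-q bound
  have main : ∀ q ∈ Q,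
      ‖(X ^ ((r : ℝ) / d) : ℝ) *
        ∑' x : Fin r → ℤ,
          (if x ≠ 0 then
            fourierZ r q (Ψ q) x *
              FourierTransform.fourier (⇑φ : EuclideanSpace ℝ (Fin r) → ℂ)
                (WithLp.toLp 2 (fun i => (x i : ℝ) * X ^ (1 / d) / q) : EuclideanSpace ℝ (Fin r))
          else 0)‖
      ≤ X ^ ((r : ℝ) / d) * (C₀ * Hfun r Ψ X η (1/d) ((2:ℝ) ^ (Nat.log 2 q)) q)
        + X ^ ((r : ℝ) / d) *
          ((Ck * ((X ^ η)⁻¹) ^ k * (X ^ α / X ^ (1/d)) ^ (2 * r) * 2 ^ (2 * r)) * SW) := by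
    intro q hq
    rw [hQdef] at hq
    obtain ⟨hqr, hsf, hqX⟩ := Finset.mem_filter.1 hq
    have hq0 : q ≠ 0 := hsf.ne_zero
    have hq1R : (1:ℝ) ≤ (q:ℝ) := by exact_mod_cast Nat.one_le_iff_ne_zero.2 hq0
    have hqR0 : (0:ℝ) < (q:ℝ) := by linarith
    set j : ℕ := Nat.log 2 q with hjdef
    have hq2j : (q:ℝ) ≤ 2 * (2:ℝ) ^ j := by
      have h1 : q < 2 ^ (j + 1) := Nat.lt_pow_succ_log_self one_lt_two q
      have h2 : (q:ℝ) < ((2 ^ (j+1) : ℕ) : ℝ) := by exact_mod_cast h1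
      push_cast [pow_succ] at h2
      linarith
    set yy : (Fin r → ℤ) → EuclideanSpace ℝ (Fin r) :=
      fun x => (WithLp.toLp 2 (fun i => (x i : ℝ) * X ^ (1 / d) / q) : EuclideanSpace ℝ (Fin r)) with hyy
    set F : (Fin r → ℤ) → ℂ := fun x =>
      if x ≠ 0 then
        fourierZ r q (Ψ q) x *
          FourierTransform.fourier (⇑φ : EuclideanSpace ℝ (Fin r) → ℂ)
            (WithLp.toLp 2 (fun i => (x i : ℝ) * X ^ (1 / d) / q) : EuclideanSpace ℝ (Fin r))
      else 0 with hFdef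
    have hFy : ∀ x : Fin r → ℤ, x ≠ 0 →
        F x = fourierZ r q (Ψ q) x * FourierTransform.fourier (⇑φ : EuclideanSpace ℝ (Fin r) → ℂ) (yy x) := by
      intro x hx
      simp only [hFdef, hyy, if_pos hx]
    have ha0 : (0:ℝ) < X ^ (1/d) / q := div_pos hP0 hqR0
    -- coordinates of yy
    have hcoordeq : ∀ (x : Fin r → ℤ) (i : Fin r),
        |yy x i| = |(x i : ℝ)| * (X ^ (1/d) / q) := by
      intro x i
      simp only [hyy, PiLp.toLp_apply]
      rw [abs_div, abs_mul, abs_of_pos hP0, abs_of_pos hqR0, mul_div_assoc]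
    have hyx : ∀ x : Fin r → ℤ, (X ^ (1/d) / q) * ‖x‖ ≤ ‖yy x‖ := by
      intro x
      have hcoord : ∀ i, |(x i : ℝ)| ≤ ((q:ℝ) / X ^ (1/d)) * ‖yy x‖ := by
        intro i
        have h1 : |yy x i| ≤ ‖yy x‖ := coord_le_norm r (yy x) i
        rw [hcoordeq x i] at h1
        have h2 : |(x i : ℝ)| ≤ ‖yy x‖ / (X ^ (1/d) / q) := (le_div_iff₀ ha0).2 h1
        have e : ‖yy x‖ / (X ^ (1/d) / q) = ((q:ℝ) / X ^ (1/d)) * ‖yy x‖ := by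
          field_simp
        rwa [e] at h2
      have h3 : ‖x‖ ≤ ((q:ℝ) / X ^ (1/d)) * ‖yy x‖ :=
        pinorm_le r x _ (mul_nonneg (div_nonneg hqR0.le hP0.le) (norm_nonneg _)) hcoord
      calc (X ^ (1/d) / q) * ‖x‖ ≤ (X ^ (1/d) / q) * (((q:ℝ) / X ^ (1/d)) * ‖yy x‖) :=
            mul_le_mul_of_nonneg_left h3 ha0.le
        _ = ‖yy x‖ := by
            field_simp
    -- decay bounds
    have hdecay : ∀ (m : ℕ) (Cm : ℝ), (∀ ξ, ‖ξ‖ ^ m * ‖g ξ‖ ≤ Cm) →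
        ∀ (x : Fin r → ℤ) (b : ℝ), 0 < b → b ≤ ‖yy x‖ → ‖g (yy x)‖ ≤ Cm / b ^ m := by
      intro m Cm hCm x b hb hble
      rw [le_div_iff₀ (by positivity)]
      calc ‖g (yy x)‖ * b ^ m ≤ ‖g (yy x)‖ * ‖yy x‖ ^ m :=
            mul_le_mul_of_nonneg_left (pow_le_pow_left₀ hb.le hble m) (norm_nonneg _)
        _ = ‖yy x‖ ^ m * ‖g (yy x)‖ := mul_comm _ _
        _ ≤ Cm := hCm _
    have hFnorm : ∀ x : Fin r → ℤ, x ≠ 0 → ‖F x‖ ≤ ‖g (yy x)‖ := by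
      intro x hx
      rw [hFy x hx, norm_mul, hg (yy x)]
      calc ‖fourierZ r q (Ψ q) x‖ * ‖g (yy x)‖ ≤ 1 * ‖g (yy x)‖ := by
            apply mul_le_mul_of_nonneg_right _ (norm_nonneg _)
            exact abs_fourierZ_le_one r q (Nat.one_le_iff_ne_zero.2 hq0) (Ψ q) (hΨ1 q hsf) x
        _ = ‖g (yy x)‖ := one_mul _
    have hF0 : F 0 = 0 := by simp [hFdef]
    -- summable majorant
    have hmaj : ∀ x : Fin r → ℤ,
        ‖F x‖ ≤ (Cr * ((q:ℝ) / X ^ (1/d)) ^ (2*r) * 2 ^ (2*r)) * W r x := by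
      intro x
      by_cases hx : x = 0
      · rw [hx, hF0, norm_zero]
        apply mul_nonneg _ (W_nonneg r 0)
        apply mul_nonneg (mul_nonneg hCrpos.le (by positivity)) (by positivity)
      · have hx1 : (1:ℝ) ≤ ‖x‖ := one_le_pinorm r x hx
        have hbx : (0:ℝ) < (X ^ (1/d) / q) * ‖x‖ := mul_pos ha0 (by linarith)
        have h1 := hdecay (2*r) Cr hCr' x _ hbx (hyx x)
        have e1 : Cr / ((X ^ (1/d) / q) * ‖x‖) ^ (2*r)
            = Cr * ((q:ℝ) / X ^ (1/d)) ^ (2*r) * (‖x‖ ^ (2*r))⁻¹ := by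
          rw [mul_pow, div_eq_mul_inv Cr, mul_inv, ← div_eq_mul_inv, ← inv_div ((q:ℝ)) _]
          rw [inv_pow, inv_inv]
          ring
        calc ‖F x‖ ≤ ‖g (yy x)‖ := hFnorm x hx
          _ ≤ Cr / ((X ^ (1/d) / q) * ‖x‖) ^ (2*r) := h1
          _ = Cr * ((q:ℝ) / X ^ (1/d)) ^ (2*r) * (‖x‖ ^ (2*r))⁻¹ := e1
          _ ≤ Cr * ((q:ℝ) / X ^ (1/d)) ^ (2*r) * (2 ^ (2*r) * W r x) := by
              apply mul_le_mul_of_nonneg_left (W_bound r x hx1)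
              apply mul_nonneg hCrpos.le (by positivity)
          _ = (Cr * ((q:ℝ) / X ^ (1/d)) ^ (2*r) * 2 ^ (2*r)) * W r x := by ring
    have hFsum : Summable (fun x => ‖F x‖) :=
      Summable.of_nonneg_of_le (fun x => norm_nonneg _) hmaj ((summable_W r).mul_left _)
    -- split into box and tail
    set Bx : (Fin r → ℤ) → ℝ := fun x =>
      if x ≠ 0 ∧ ∀ i, |(x i : ℝ)| ≤ 2 * (2:ℝ) ^ j * X ^ (η - 1/d) then ‖F x‖ else 0 with hBdef
    set Tl : (Fin r → ℤ) → ℝ := fun x =>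
      if x ≠ 0 ∧ ¬ ∀ i, |(x i : ℝ)| ≤ 2 * (2:ℝ) ^ j * X ^ (η - 1/d) then ‖F x‖ else 0 with hTdef
    have hsplit : ∀ x, ‖F x‖ = Bx x + Tl x := by
      intro x
      simp only [hBdef, hTdef]
      by_cases hx : x = 0
      · rw [if_neg (by simp [hx]), if_neg (by simp [hx]), hx, hF0, norm_zero, add_zero]
      · by_cases hb : ∀ i, |(x i : ℝ)| ≤ 2 * (2:ℝ) ^ j * X ^ (η - 1/d)
        · rw [if_pos ⟨hx, hb⟩, if_neg (by rintro ⟨-, hh⟩; exact hh hb), add_zero]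
        · rw [if_neg (by rintro ⟨-, hh⟩; exact hb hh), if_pos ⟨hx, hb⟩, zero_add]
    have hBle : ∀ x, Bx x ≤ ‖F x‖ := by
      intro x
      simp only [hBdef]
      split
      · exact le_rfl
      · exact norm_nonneg _
    have hTle : ∀ x, Tl x ≤ ‖F x‖ := by
      intro x
      simp only [hTdef]
      split
      · exact le_rfl
      · exact norm_nonneg _
    have hB0 : ∀ x, 0 ≤ Bx x := by
      intro x; simp only [hBdef]; split
      · exact norm_nonneg _
      · exact le_rfl
    have hT0 : ∀ x, 0 ≤ Tl x := by
      intro x; simp only [hTdef]; split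
      · exact norm_nonneg _
      · exact le_rfl
    have hBsum : Summable Bx := Summable.of_nonneg_of_le hB0 hBle hFsum
    have hTsum : Summable Tl := Summable.of_nonneg_of_le hT0 hTle hFsum
    have htsum_eq : ∑' x, ‖F x‖ = (∑' x, Bx x) + (∑' x, Tl x) := by
      rw [tsum_congr hsplit, Summable.tsum_add hBsum hTsum]
    -- box part
    have hhsum : Summable (fun x : Fin r → ℤ =>
        if x ≠ 0 ∧ ∀ i, |(x i : ℝ)| ≤ 2 * (2:ℝ) ^ j * X ^ (η - 1/d) then
          ‖fourierZ r q (Ψ q) x‖ else 0) := by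
      apply summable_of_ne_finset_zero
        (s := Fintype.piFinset fun _ : Fin r =>
          Finset.Icc (-(⌈2 * (2:ℝ) ^ j * X ^ (η - 1/d)⌉ : ℤ)) ⌈2 * (2:ℝ) ^ j * X ^ (η - 1/d)⌉)
      intro x hx
      rw [if_neg]
      rintro ⟨-, hbox2⟩
      apply hx
      rw [Fintype.mem_piFinset]
      intro i
      rw [Finset.mem_Icc, ← abs_le]
      have h1 : ((|x i| : ℤ) : ℝ) ≤ (⌈2 * (2:ℝ) ^ j * X ^ (η - 1/d)⌉ : ℤ) := by
        push_cast
        exact le_trans (hbox2 i) (Int.le_ceil _)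
      exact_mod_cast h1
    have hboxle : (∑' x, Bx x) ≤ C₀ * Hfun r Ψ X η (1/d) ((2:ℝ) ^ j) q := by
      have he : Hfun r Ψ X η (1/d) ((2:ℝ) ^ j) q = ∑' x : Fin r → ℤ,
          (if x ≠ 0 ∧ ∀ i, |(x i : ℝ)| ≤ 2 * (2:ℝ) ^ j * X ^ (η - 1/d) then
            ‖fourierZ r q (Ψ q) x‖ else 0) := rfl
      rw [he, ← tsum_mul_left]
      apply Summable.tsum_le_tsum _ hBsum (hhsum.mul_left C₀)
      intro x
      simp only [hBdef]
      by_cases hcond : x ≠ 0 ∧ ∀ i, |(x i : ℝ)| ≤ 2 * (2:ℝ) ^ j * X ^ (η - 1/d)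
      · rw [if_pos hcond, if_pos hcond]
        obtain ⟨hx0, -⟩ := hcond
        rw [hFy x hx0, norm_mul, hg (yy x)]
        calc ‖fourierZ r q (Ψ q) x‖ * ‖g (yy x)‖ ≤ ‖fourierZ r q (Ψ q) x‖ * C₀ :=
              mul_le_mul_of_nonneg_left (hC₀' (yy x)) (norm_nonneg _)
          _ = C₀ * ‖fourierZ r q (Ψ q) x‖ := by
              ring
      · rw [if_neg hcond, if_neg hcond, mul_zero]
    -- tail part
    have htl : (∑' x, Tl x) ≤
        (Ck * ((X ^ η)⁻¹) ^ k * ((q:ℝ) / X ^ (1/d)) ^ (2*r) * 2 ^ (2*r)) * SW := by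
      rw [hSWdef, ← tsum_mul_left]
      apply Summable.tsum_le_tsum _ hTsum ((summable_W r).mul_left _)
      intro x
      simp only [hTdef]
      by_cases hcond : x ≠ 0 ∧ ¬ ∀ i, |(x i : ℝ)| ≤ 2 * (2:ℝ) ^ j * X ^ (η - 1/d)
      · obtain ⟨hx0, hnb⟩ := hcond
        push_neg at hnb
        obtain ⟨i, hi⟩ := hnb
        have hx1 : (1:ℝ) ≤ ‖x‖ := one_le_pinorm r x hx0
        have hbx : (0:ℝ) < (X ^ (1/d) / q) * ‖x‖ := mul_pos ha0 (by linarith)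
        -- lower bound ‖yy x‖ ≥ X ^ η
        have hrwη : X ^ (η - 1/d) * X ^ (1/d) = X ^ η := by
          rw [← Real.rpow_add hX0]
          norm_num
        have hXηy : X ^ η ≤ ‖yy x‖ := by
          have h5 : (1:ℝ) ≤ 2 * (2:ℝ) ^ j / q := (one_le_div hqR0).2 hq2j
          have h6 : X ^ η ≤ (2 * (2:ℝ) ^ j * X ^ (η - 1/d)) * (X ^ (1/d) / q) := by
            calc X ^ η = 1 * X ^ η := (one_mul _).symm
              _ ≤ (2 * (2:ℝ) ^ j / q) * X ^ η :=
                  mul_le_mul_of_nonneg_right h5 hXη.le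
              _ = (2 * (2:ℝ) ^ j * X ^ (η - 1/d)) * (X ^ (1/d) / q) := by
                  rw [← hrwη]
                  field_simp
          have h7 : (2 * (2:ℝ) ^ j * X ^ (η - 1/d)) * (X ^ (1/d) / q)
              ≤ |(x i : ℝ)| * (X ^ (1/d) / q) :=
            mul_le_mul_of_nonneg_right hi.le ha0.le
          have h8 : |(x i : ℝ)| * (X ^ (1/d) / q) = |yy x i| := (hcoordeq x i).symm
          have h9 : |yy x i| ≤ ‖yy x‖ := coord_le_norm r (yy x) i
          linarith
        -- combine the two lower bounds
        have hkey : ‖g (yy x)‖ * ((X ^ η) ^ k * ((X ^ (1/d) / q) * ‖x‖) ^ (2*r)) ≤ Ck := by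
          calc ‖g (yy x)‖ * ((X ^ η) ^ k * ((X ^ (1/d) / q) * ‖x‖) ^ (2*r))
              ≤ ‖g (yy x)‖ * (‖yy x‖ ^ k * ‖yy x‖ ^ (2*r)) := by
                apply mul_le_mul_of_nonneg_left _ (norm_nonneg _)
                apply mul_le_mul (pow_le_pow_left₀ hXη.le hXηy k)
                  (pow_le_pow_left₀ hbx.le (hyx x) (2*r)) (by positivity) (by positivity)
            _ = ‖yy x‖ ^ (k + 2*r) * ‖g (yy x)‖ := by
                rw [← pow_add]; ring
            _ ≤ Ck := hCk' _
        have hpos2 : (0:ℝ) < (X ^ η) ^ k * ((X ^ (1/d) / q) * ‖x‖) ^ (2*r) := by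
          apply mul_pos (pow_pos hXη k) (pow_pos hbx _)
        have hgy : ‖g (yy x)‖ ≤ Ck / ((X ^ η) ^ k * ((X ^ (1/d) / q) * ‖x‖) ^ (2*r)) :=
          (le_div_iff₀ hpos2).2 hkey
        have e2 : Ck / ((X ^ η) ^ k * ((X ^ (1/d) / q) * ‖x‖) ^ (2*r))
            = Ck * ((X ^ η)⁻¹) ^ k * ((q:ℝ) / X ^ (1/d)) ^ (2*r) * (‖x‖ ^ (2*r))⁻¹ := by
          rw [mul_pow, div_eq_mul_inv Ck, mul_inv, mul_inv, ← inv_pow (X ^ η) k,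
            ← inv_pow _ (2*r), ← inv_pow _ (2*r), inv_div ((X ^ (1/d))) ((q:ℝ))]
          ring
        calc (if x ≠ 0 ∧ ¬ ∀ i, |(x i : ℝ)| ≤ 2 * (2:ℝ) ^ j * X ^ (η - 1/d)
              then ‖F x‖ else 0) ≤ ‖g (yy x)‖ := by
              rw [if_pos ⟨hx0, by push_neg; exact ⟨i, hi⟩⟩]; exact hFnorm x hx0
          _ ≤ Ck / ((X ^ η) ^ k * ((X ^ (1/d) / q) * ‖x‖) ^ (2*r)) := hgy
          _ = Ck * ((X ^ η)⁻¹) ^ k * ((q:ℝ) / X ^ (1/d)) ^ (2*r) * (‖x‖ ^ (2*r))⁻¹ := e2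
          _ ≤ Ck * ((X ^ η)⁻¹) ^ k * ((q:ℝ) / X ^ (1/d)) ^ (2*r) * (2 ^ (2*r) * W r x) := by
              apply mul_le_mul_of_nonneg_left (W_bound r x hx1)
              apply mul_nonneg (mul_nonneg hCkpos.le (by positivity)) (by positivity)
          _ = (Ck * ((X ^ η)⁻¹) ^ k * ((q:ℝ) / X ^ (1/d)) ^ (2*r) * 2 ^ (2*r)) * W r x := by
              ring
      · rw [if_neg hcond]
        apply mul_nonneg _ (W_nonneg r x)
        apply mul_nonneg (mul_nonneg (mul_nonneg hCkpos.le (by positivity)) (by positivity))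
          (by positivity)
    -- assemble
    have habs : ‖∑' x, F x‖ ≤ ∑' x, ‖F x‖ := by
      exact norm_tsum_le_tsum_norm hFsum
    have hqpow : ((q:ℝ) / X ^ (1/d)) ^ (2*r) ≤ (X ^ α / X ^ (1/d)) ^ (2*r) := by
      apply pow_le_pow_left₀ (div_nonneg hqR0.le hP0.le)
      exact (div_le_div_iff_of_pos_right hP0).2 hqX.le
    calc ‖(X ^ ((r:ℝ)/d) : ℝ) * ∑' x, F x‖
        = X ^ ((r:ℝ)/d) * ‖∑' x, F x‖ := by
          rw [norm_mul, Complex.norm_real, Real.norm_eq_abs, abs_of_nonneg hXrd]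
      _ ≤ X ^ ((r:ℝ)/d) * ((∑' x, Bx x) + (∑' x, Tl x)) := by
          apply mul_le_mul_of_nonneg_left _ hXrd
          rw [← htsum_eq]
          exact habs
      _ ≤ X ^ ((r:ℝ)/d) * (C₀ * Hfun r Ψ X η (1/d) ((2:ℝ) ^ j) q
            + (Ck * ((X ^ η)⁻¹) ^ k * ((q:ℝ) / X ^ (1/d)) ^ (2*r) * 2 ^ (2*r)) * SW) :=
          mul_le_mul_of_nonneg_left (add_le_add hboxle htl) hXrd
      _ = X ^ ((r:ℝ)/d) * (C₀ * Hfun r Ψ X η (1/d) ((2:ℝ) ^ j) q)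
            + X ^ ((r:ℝ)/d) *
              ((Ck * ((X ^ η)⁻¹) ^ k * ((q:ℝ) / X ^ (1/d)) ^ (2*r) * 2 ^ (2*r)) * SW) := by
          rw [mul_add]
      _ ≤ X ^ ((r:ℝ)/d) * (C₀ * Hfun r Ψ X η (1/d) ((2:ℝ) ^ j) q)
            + X ^ ((r:ℝ)/d) *
              ((Ck * ((X ^ η)⁻¹) ^ k * (X ^ α / X ^ (1/d)) ^ (2 * r) * 2 ^ (2 * r)) * SW) := by
          apply add_le_add le_rfl
          apply mul_le_mul_of_nonneg_left _ hXrd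
          apply mul_le_mul_of_nonneg_right _ hSW0
          apply mul_le_mul_of_nonneg_right _ (by positivity : (0:ℝ) ≤ (2:ℝ) ^ (2*r))
          exact mul_le_mul_of_nonneg_left hqpow (mul_nonneg hCkpos.le (by positivity))

  -- summing the box parts
  have hbox : X ^ ((r : ℝ) / d) *
      ∑ q ∈ Q, (C₀ * Hfun r Ψ X η (1/d) ((2:ℝ) ^ (Nat.log 2 q)) q)
      ≤ (C₀ * A * C₁) * X ^ c' := by
    have hmaps : ∀ q ∈ Q, Nat.log 2 q ∈ Finset.range J := by
      intro q hq
      rw [hQdef] at hq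
      obtain ⟨hqr, -, -⟩ := Finset.mem_filter.1 hq
      rw [Finset.mem_range] at hqr ⊢
      rw [hJdef]
      exact Nat.lt_succ_of_le (Nat.log_mono_right hqr.le)
    have hregroup : ∑ q ∈ Q, Hfun r Ψ X η (1/d) ((2:ℝ) ^ (Nat.log 2 q)) q
        = ∑ j ∈ Finset.range J, ∑ q ∈ Q.filter (fun q => Nat.log 2 q = j),
            Hfun r Ψ X η (1/d) ((2:ℝ) ^ (Nat.log 2 q)) q :=
      (Finset.sum_fiberwise_of_maps_to hmaps _).symm
    have hperj : ∀ j ∈ Finset.range J,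
        X ^ ((r:ℝ)/d) * ∑ q ∈ Q.filter (fun q => Nat.log 2 q = j),
          Hfun r Ψ X η (1/d) ((2:ℝ) ^ (Nat.log 2 q)) q ≤ C₁ * X ^ c := by
      intro j _
      have hcongr : ∑ q ∈ Q.filter (fun q => Nat.log 2 q = j),
          Hfun r Ψ X η (1/d) ((2:ℝ) ^ (Nat.log 2 q)) q
          = ∑ q ∈ Q.filter (fun q => Nat.log 2 q = j), Hfun r Ψ X η (1/d) ((2:ℝ) ^ j) q := by
        apply Finset.sum_congr rfl
        intro q hq
        rw [(Finset.mem_filter.1 hq).2]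
      rw [hcongr]
      by_cases h2j : ((2:ℝ) ^ j) ≤ X ^ α
      · have hh := hyp X hX ((2:ℝ) ^ j) (one_le_pow₀ one_le_two) h2j
        refine le_trans ?_ hh
        apply mul_le_mul_of_nonneg_left _ hXrd
        apply Finset.sum_le_sum_of_subset_of_nonneg
        · intro q hq
          obtain ⟨hqQ, hlogq⟩ := Finset.mem_filter.1 hq
          rw [hQdef] at hqQ
          obtain ⟨-, hsf, -⟩ := Finset.mem_filter.1 hqQ
          have hq0 : q ≠ 0 := hsf.ne_zero
          have hlow : 2 ^ j ≤ q := hlogq ▸ Nat.pow_log_le_self 2 hq0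
          have hhigh : q < 2 ^ (j + 1) := hlogq ▸ Nat.lt_pow_succ_log_self one_lt_two q
          have hfloor : ⌊2 * ((2:ℝ) ^ j)⌋₊ = 2 ^ (j + 1) := by
            have e : (2:ℝ) * 2 ^ j = ((2 ^ (j+1) : ℕ) : ℝ) := by
              push_cast [pow_succ]; ring
            rw [e, Nat.floor_natCast]
          rw [Finset.mem_filter, Finset.mem_range, hfloor]
          refine ⟨Nat.lt_succ_of_lt hhigh, hsf, ?_, ?_⟩
          · exact_mod_cast hlow
          · have : (q:ℝ) < ((2 ^ (j+1) : ℕ) : ℝ) := by exact_mod_cast hhigh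
            push_cast [pow_succ] at this
            linarith
        · intro q _ _
          exact Hfun_nonneg _ _ _ _ _ _ _
      · have hempty : Q.filter (fun q => Nat.log 2 q = j) = ∅ := by
          rw [Finset.filter_eq_empty_iff]
          intro q hqQ hlogq
          rw [hQdef] at hqQ
          obtain ⟨-, hsf, hqX⟩ := Finset.mem_filter.1 hqQ
          have hlow : 2 ^ j ≤ q := hlogq ▸ Nat.pow_log_le_self 2 hsf.ne_zero
          have : ((2:ℝ) ^ j) ≤ X ^ α := by
            have h1 : ((2:ℝ) ^ j) ≤ (q:ℝ) := by exact_mod_cast hlow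
            linarith
          exact h2j this
        rw [hempty, Finset.sum_empty, mul_zero]
        exact hC₁X
    have hJb : ((J:ℕ):ℝ) ≤ A * X ^ ε := by
      have hceil0 : ⌈X ^ α⌉₊ ≠ 0 := (Nat.ceil_pos.2 (by positivity : (0:ℝ) < X ^ α)).ne'
      have h2L : ((2:ℝ)) ^ (Nat.log 2 ⌈X ^ α⌉₊) ≤ 2 * X ^ α := by
        have h1 : (2:ℕ) ^ (Nat.log 2 ⌈X ^ α⌉₊) ≤ ⌈X ^ α⌉₊ := Nat.pow_log_le_self 2 hceil0
        have h2 : (⌈X ^ α⌉₊ : ℝ) < X ^ α + 1 := Nat.ceil_lt_add_one (by positivity)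
        have h3 : ((2:ℝ)) ^ (Nat.log 2 ⌈X ^ α⌉₊) ≤ (⌈X ^ α⌉₊ : ℝ) := by exact_mod_cast h1
        linarith
      have hlogL : ((Nat.log 2 ⌈X ^ α⌉₊ : ℕ) : ℝ) * Real.log 2
          ≤ Real.log 2 + α * Real.log X := by
        have h1 := Real.log_le_log (by positivity) h2L
        rw [Real.log_pow, Real.log_mul two_ne_zero (by positivity), Real.log_rpow hX0] at h1
        exact_mod_cast h1
      have hlogX : Real.log X ≤ X ^ ε / ε := Real.log_le_rpow_div hX0.le hε
      have hXε1 : (1:ℝ) ≤ X ^ ε := Real.one_le_rpow hX1 hε.le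
      have e1 : ((Nat.log 2 ⌈X ^ α⌉₊ : ℕ) : ℝ) ≤ 1 + α * Real.log X / Real.log 2 := by
        rw [← le_div_iff₀ hlog2] at hlogL
        calc ((Nat.log 2 ⌈X ^ α⌉₊ : ℕ) : ℝ) ≤ (Real.log 2 + α * Real.log X) / Real.log 2 :=
              hlogL
          _ = 1 + α * Real.log X / Real.log 2 := by
              field_simp
      have e2 : α * Real.log X / Real.log 2 ≤ (α/(ε*Real.log 2)) * X ^ ε := by
        have h := mul_le_mul_of_nonneg_left hlogX hα.le
        calc α * Real.log X / Real.log 2 ≤ α * (X ^ ε / ε) / Real.log 2 :=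
              (div_le_div_iff_of_pos_right hlog2).2 h
          _ = (α/(ε*Real.log 2)) * X ^ ε := by
              field_simp
      rw [hJdef, hAdef]
      push_cast
      nlinarith [e1, e2, hXε1, hlog2, hε]
    have e : ∑ q ∈ Q, (C₀ * Hfun r Ψ X η (1/d) ((2:ℝ) ^ (Nat.log 2 q)) q)
        = C₀ * ∑ q ∈ Q, Hfun r Ψ X η (1/d) ((2:ℝ) ^ (Nat.log 2 q)) q := by
      rw [Finset.mul_sum]
    rw [e, mul_left_comm, hregroup, Finset.mul_sum]
    have hCAC : (0:ℝ) ≤ C₀ * A * C₁ := mul_nonneg (mul_nonneg hC₀pos.le hA0) hC₁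
    calc C₀ * ∑ j ∈ Finset.range J, (X ^ ((r:ℝ)/d) *
          ∑ q ∈ Q.filter (fun q => Nat.log 2 q = j),
            Hfun r Ψ X η (1/d) ((2:ℝ) ^ (Nat.log 2 q)) q)
        ≤ C₀ * ∑ _j ∈ Finset.range J, (C₁ * X ^ c) :=
          mul_le_mul_of_nonneg_left (Finset.sum_le_sum hperj) hC₀pos.le
      _ = C₀ * (((J:ℕ):ℝ) * (C₁ * X ^ c)) := by
          rw [Finset.sum_const, Finset.card_range, nsmul_eq_mul]
      _ ≤ C₀ * ((A * X ^ ε) * (C₁ * X ^ c)) :=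
          mul_le_mul_of_nonneg_left (mul_le_mul_of_nonneg_right hJb hC₁X) hC₀pos.le
      _ = (C₀ * A * C₁) * (X ^ ε * X ^ c) := by ring
      _ = (C₀ * A * C₁) * X ^ (ε + c) := by rw [← Real.rpow_add hX0]
      _ ≤ (C₀ * A * C₁) * X ^ c' :=
          mul_le_mul_of_nonneg_left
            (Real.rpow_le_rpow_of_exponent_le hX1 (by linarith [hcε])) hCAC
  -- summing the tail parts
  have htail : ∑ q ∈ Q, X ^ ((r : ℝ) / d) *
      ((Ck * ((X ^ η)⁻¹) ^ k * (X ^ α / X ^ (1/d)) ^ (2 * r) * 2 ^ (2 * r)) * SW)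
      ≤ Ct * X ^ c' := by
    have hE : X ^ α * X ^ ((r:ℝ)/d) * ((X ^ η)⁻¹) ^ k * (X ^ α / X ^ (1/d)) ^ (2*r) ≤ 1 := by
      have e1 : ((X ^ η)⁻¹ : ℝ) ^ k = X ^ (-η * (k:ℝ)) := by
        rw [← Real.rpow_neg hX0.le, ← Real.rpow_natCast (X ^ (-η)) k, ← Real.rpow_mul hX0.le]
      have e2 : (X ^ α / X ^ (1/d)) ^ (2*r) = X ^ ((α - 1/d) * ((2*r : ℕ):ℝ)) := by
        rw [← Real.rpow_sub hX0, ← Real.rpow_natCast (X ^ (α - 1/d)) (2*r),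
          ← Real.rpow_mul hX0.le]
      rw [e1, e2, ← Real.rpow_add hX0, ← Real.rpow_add hX0, ← Real.rpow_add hX0]
      apply Real.rpow_le_one_of_one_le_of_nonpos hX1
      push_cast
      have key : α + (r:ℝ) / d + -η * (k:ℝ) + (α - 1/d) * (2*(r:ℝ))
          = ((r:ℝ)/d + α*(2*(r:ℝ)+1) - η*(k:ℝ)) - 2*((r:ℝ)/d) := by ring
      rw [key]
      have h1 : (r:ℝ)/d + α*(2*(r:ℝ)+1) - η*(k:ℝ) ≤ 0 := by linarith [hk]
      linarith [hrd.le]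
    have hconst0 : (0:ℝ) ≤ X ^ ((r:ℝ)/d) *
        ((Ck * ((X ^ η)⁻¹) ^ k * (X ^ α / X ^ (1/d)) ^ (2*r) * 2 ^ (2*r)) * SW) := by
      apply mul_nonneg hXrd
      apply mul_nonneg _ hSW0
      apply mul_nonneg _ (by positivity)
      apply mul_nonneg _ (by positivity)
      apply mul_nonneg hCkpos.le (by positivity)
    have hcard : ((Q.card : ℕ) : ℝ) ≤ 2 * X ^ α := by
      have h1 : Q.card ≤ ⌈X ^ α⌉₊ := le_trans (Finset.card_filter_le _ _)
        (le_of_eq (Finset.card_range _))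
      have h2 : (⌈X ^ α⌉₊ : ℝ) < X ^ α + 1 := Nat.ceil_lt_add_one (by positivity)
      have h3 : ((Q.card : ℕ) : ℝ) ≤ (⌈X ^ α⌉₊ : ℝ) := by exact_mod_cast h1
      linarith
    rw [Finset.sum_const, nsmul_eq_mul]
    calc ((Q.card : ℕ) : ℝ) * (X ^ ((r:ℝ)/d) *
          ((Ck * ((X ^ η)⁻¹) ^ k * (X ^ α / X ^ (1/d)) ^ (2*r) * 2 ^ (2*r)) * SW))
        ≤ (2 * X ^ α) * (X ^ ((r:ℝ)/d) *
          ((Ck * ((X ^ η)⁻¹) ^ k * (X ^ α / X ^ (1/d)) ^ (2*r) * 2 ^ (2*r)) * SW)) :=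
          mul_le_mul_of_nonneg_right hcard hconst0
      _ = Ct * (X ^ α * X ^ ((r:ℝ)/d) * ((X ^ η)⁻¹) ^ k * (X ^ α / X ^ (1/d)) ^ (2*r)) := by
          rw [hCtdef]; ring
      _ ≤ Ct * 1 := mul_le_mul_of_nonneg_left hE hCt0
      _ = Ct := mul_one _
      _ ≤ Ct * X ^ c' := le_mul_of_one_le_right hCt0 (Real.one_le_rpow hX1 hc'0)
  calc ∑ q ∈ Q, ‖(X ^ ((r : ℝ) / d) : ℝ) *
        ∑' x : Fin r → ℤ,
          (if x ≠ 0 then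
            fourierZ r q (Ψ q) x *
              FourierTransform.fourier (⇑φ : EuclideanSpace ℝ (Fin r) → ℂ)
                (WithLp.toLp 2 (fun i => (x i : ℝ) * X ^ (1 / d) / q) : EuclideanSpace ℝ (Fin r))
          else 0)‖
      ≤ ∑ q ∈ Q, (X ^ ((r : ℝ) / d) * (C₀ * Hfun r Ψ X η (1/d) ((2:ℝ) ^ (Nat.log 2 q)) q)
        + X ^ ((r : ℝ) / d) *
          ((Ck * ((X ^ η)⁻¹) ^ k * (X ^ α / X ^ (1/d)) ^ (2 * r) * 2 ^ (2 * r)) * SW)) :=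
        Finset.sum_le_sum main
    _ = X ^ ((r : ℝ) / d) *
          ∑ q ∈ Q, (C₀ * Hfun r Ψ X η (1/d) ((2:ℝ) ^ (Nat.log 2 q)) q)
        + ∑ q ∈ Q, X ^ ((r : ℝ) / d) *
          ((Ck * ((X ^ η)⁻¹) ^ k * (X ^ α / X ^ (1/d)) ^ (2 * r) * 2 ^ (2 * r)) * SW) := by
        rw [Finset.sum_add_distrib, Finset.mul_sum]
    _ ≤ (C₀ * A * C₁) * X ^ c' + Ct * X ^ c' := add_le_add hbox htail
    _ = (C₀ * A * C₁ + Ct) * X ^ c' := by ring
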